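/- Let m_2, m_3 be positive integers, let (U, V) be a centered bivariate Gaussian random vector with U ∼ N(0,1) and V ∼ N(0,1), and set x = E[UV]. Then the joint moments admit the hypergeometric representations: E[U^{2m_2+1} V^{2m_3+1}] = (2m_2+1)!! (2m_3+1)!! · x · F(−m_2, −m_3; 3/2, x^2); E[U^{2m_2} V^{2m_3+2}] = (2m_2−1)!! (2m_3+1)!! · F(−m_2, −m_3−1; 1/2, x^2); and E[U^{2m_2+2} V^{2m_3}] = (2m_2+1)!! (2m_3−1)!! · F(−m_2−1, −m_3; 1/2, x^2). -/

import Mathlib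

open MeasureTheory ProbabilityTheory Finset
open scoped NNReal

/-- A centered (jointly) Gaussian random vector: every real-linear combination of the
components is a centered Gaussian random variable, and each component is non-degenerate. -/
def IsCenteredGaussianVec {Ω : Type*} [MeasureSpace Ω] {n : ℕ}
    (X : Fin n → Ω → ℝ) : Prop :=
  (∀ i, Measurable (X i)) ∧
  (∀ a : Fin n → ℝ, ∃ v : ℝ≥0,
      Measure.map (fun ω => ∑ i, a i * X i ω) ℙ = gaussianReal 0 v) ∧
  (∀ i, ∃ v : ℝ≥0, 0 < v ∧ Measure.map (X i) ℙ = gaussianReal 0 v)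

/-- `df k = (2k-1)!! = 1·3⋯(2k-1)`, with `df 0 = (-1)!! = 1`. -/
noncomputable def df (k : ℕ) : ℝ := ∏ i ∈ Finset.range k, (2 * (i : ℝ) + 1)

/-- A centered bivariate Gaussian random vector `(U, V)` with standard `N(0,1)` marginals. -/
def IsStdBivGaussian {Ω : Type*} [MeasureSpace Ω] (U V : Ω → ℝ) : Prop :=
  Measurable U ∧ Measurable V ∧
  (∀ a b : ℝ, ∃ v : ℝ≥0,
      Measure.map (fun ω => a * U ω + b * V ω) ℙ = gaussianReal 0 v) ∧
  Measure.map U ℙ = gaussianReal 0 1 ∧ Measure.map V ℙ = gaussianReal 0 1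

/-- The terminating Gauss hypergeometric series `F(-a, -b; c, z)
= Σ_{j=0}^{min(a,b)} ((-a)_j (-b)_j / (c)_j) z^j / j!`. -/
noncomputable def hyperF (a b : ℕ) (c z : ℝ) : ℝ :=
  ∑ j ∈ Finset.range (min a b + 1),
    ((∏ l ∈ Finset.range j, (-(a : ℝ) + l)) * (∏ l ∈ Finset.range j, (-(b : ℝ) + l)) /
        ∏ l ∈ Finset.range j, (c + l)) * z ^ j / (Nat.factorial j)


open Real Polynomial
open scoped ENNReal

lemma integrable_pow_mul_gauss {b : ℝ} (hb : 0 < b) (n : ℕ) :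
    Integrable (fun x : ℝ => x ^ n * Real.exp (-b * x ^ 2)) := by
  have h : (-1 : ℝ) < n := by exact_mod_cast neg_one_lt_zero.trans_le (Nat.cast_nonneg n)
  simpa [Real.rpow_natCast] using integrable_rpow_mul_exp_neg_mul_sq hb h

lemma integral_pow_mul_gauss_rec {b : ℝ} (hb : 0 < b) (n : ℕ) :
    ∫ x : ℝ, x ^ (n + 2) * Real.exp (-b * x ^ 2) =
      ((n : ℝ) + 1) / (2 * b) * ∫ x : ℝ, x ^ n * Real.exp (-b * x ^ 2) := by
  have hderiv : ∀ x : ℝ, HasDerivAt (fun y : ℝ => y ^ (n + 1) * Real.exp (-b * y ^ 2))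
      (((n : ℝ) + 1) * x ^ n * Real.exp (-b * x ^ 2)
        - 2 * b * (x ^ (n + 2) * Real.exp (-b * x ^ 2))) x := by
    intro x
    have h1 : HasDerivAt (fun y : ℝ => y ^ (n + 1)) (((n : ℝ) + 1) * x ^ n) x := by
      simpa using hasDerivAt_pow (n + 1) x
    have h2 : HasDerivAt (fun y : ℝ => Real.exp (-b * y ^ 2))
        (Real.exp (-b * x ^ 2) * (-b * (2 * x))) x := by
      have h3 : HasDerivAt (fun y : ℝ => -b * y ^ 2) (-b * (2 * x)) x := by
        simpa using (hasDerivAt_pow 2 x).const_mul (-b)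
      exact h3.exp
    have := h1.mul h2
    refine this.congr_deriv ?_
    ring
  have hint : Integrable (fun x : ℝ => ((n : ℝ) + 1) * x ^ n * Real.exp (-b * x ^ 2)
      - 2 * b * (x ^ (n + 2) * Real.exp (-b * x ^ 2))) := by
    apply Integrable.sub
    · simpa [mul_assoc] using (integrable_pow_mul_gauss hb n).const_mul ((n : ℝ) + 1)
    · exact ((integrable_pow_mul_gauss hb (n + 2)).const_mul (2 * b))
  have hzero := integral_eq_zero_of_hasDerivAt_of_integrable hderiv hint
    (integrable_pow_mul_gauss hb (n + 1))
  rw [integral_sub (by simpa [mul_assoc] using (integrable_pow_mul_gauss hb n).const_mul ((n : ℝ) + 1))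
    ((integrable_pow_mul_gauss hb (n + 2)).const_mul (2 * b))] at hzero
  rw [integral_const_mul] at hzero
  have h2 : (∫ (a : ℝ), (↑n + 1) * a ^ n * rexp (-b * a ^ 2)) =
      ((n:ℝ)+1) * ∫ (a : ℝ), a ^ n * rexp (-b * a ^ 2) := by
    rw [← integral_const_mul]; congr 1; ext a; ring
  rw [h2] at hzero
  have hb' : (2 : ℝ) * b ≠ 0 := by positivity
  rw [div_mul_eq_mul_div, eq_div_iff hb']
  linarith [hzero]

lemma integral_one_mul_gauss {b : ℝ} (hb : 0 < b) :
    ∫ x : ℝ, x ^ 0 * Real.exp (-b * x ^ 2) = Real.sqrt (π / b) := by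
  simpa using integral_gaussian b

lemma integral_self_mul_gauss {b : ℝ} (hb : 0 < b) :
    ∫ x : ℝ, x ^ 1 * Real.exp (-b * x ^ 2) = 0 := by
  have hderiv : ∀ x : ℝ, HasDerivAt (fun y : ℝ => -(2 * b)⁻¹ * Real.exp (-b * y ^ 2))
      (x ^ 1 * Real.exp (-b * x ^ 2)) x := by
    intro x
    have h2 : HasDerivAt (fun y : ℝ => Real.exp (-b * y ^ 2))
        (Real.exp (-b * x ^ 2) * (-b * (2 * x))) x := by
      have h3 : HasDerivAt (fun y : ℝ => -b * y ^ 2) (-b * (2 * x)) x := by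
        simpa using (hasDerivAt_pow 2 x).const_mul (-b)
      exact h3.exp
    have := h2.const_mul (-(2 * b)⁻¹)
    refine this.congr_deriv ?_
    field_simp
  have := integral_eq_zero_of_hasDerivAt_of_integrable hderiv
    (integrable_pow_mul_gauss hb 1) ((integrable_exp_neg_mul_sq hb).const_mul _)
  exact this

lemma df_succ (k : ℕ) : df (k + 1) = df k * (2 * (k : ℝ) + 1) := by
  rw [df, Finset.prod_range_succ]; rfl

lemma integral_gauss_moments {b : ℝ} (hb : 0 < b) (k : ℕ) :
    (∫ x : ℝ, x ^ (2 * k) * Real.exp (-b * x ^ 2)) = df k / (2 * b) ^ k * Real.sqrt (π / b)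
      ∧ (∫ x : ℝ, x ^ (2 * k + 1) * Real.exp (-b * x ^ 2)) = 0 := by
  induction k with
  | zero =>
    refine ⟨?_, by simpa using integral_self_mul_gauss hb⟩
    simpa [df] using integral_one_mul_gauss hb
  | succ k ih =>
    constructor
    · have h := integral_pow_mul_gauss_rec hb (2 * k)
      have h2 : 2 * (k + 1) = 2 * k + 2 := by ring
      rw [h2, h, ih.1, df_succ]
      rw [pow_succ]
      push_cast
      field_simp
    · have h := integral_pow_mul_gauss_rec hb (2 * k + 1)
      have h2 : 2 * (k + 1) + 1 = (2 * k + 1) + 2 := by ring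
      rw [h2, h, ih.2, mul_zero]

lemma integral_fun_gaussianReal {v : ℝ≥0} (hv : v ≠ 0) (f : ℝ → ℝ) :
    (∫ x, f x ∂(gaussianReal 0 v)) = ∫ x, f x * gaussianPDFReal 0 v x := by
  rw [gaussianReal_of_var_ne_zero 0 hv]
  have hd : (gaussianPDF 0 v) = fun x => ((Real.toNNReal (gaussianPDFReal 0 v x) : ℝ≥0) : ℝ≥0∞) := by
    ext x
    rw [gaussianPDF_def]
    rfl
  rw [hd, integral_withDensity_eq_integral_smul
    ((measurable_gaussianPDFReal 0 v).real_toNNReal) f]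
  congr 1
  ext x
  rw [NNReal.smul_def, smul_eq_mul, Real.coe_toNNReal _ (gaussianPDFReal_nonneg 0 v x), mul_comm]

lemma gaussianPDFReal_zero_eq {v : ℝ≥0} (x : ℝ) :
    gaussianPDFReal 0 v x = (Real.sqrt (2 * π * v))⁻¹ * Real.exp (-((2 * (v:ℝ))⁻¹) * x ^ 2) := by
  rw [gaussianPDFReal]
  congr 1
  rw [sub_zero]
  congr 1
  field_simp

lemma integral_pow_gaussianReal (v : ℝ≥0) (k : ℕ) :
    (∫ x, x ^ (2 * k) ∂(gaussianReal 0 v)) = df k * (v : ℝ) ^ k ∧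
    (∫ x, x ^ (2 * k + 1) ∂(gaussianReal 0 v)) = 0 := by
  by_cases hv : v = 0
  · subst hv
    rw [gaussianReal_zero_var]
    rw [integral_dirac, integral_dirac]
    cases k with
    | zero => simp [df]
    | succ k => simp [pow_succ, zero_pow, Nat.mul_succ]
  · have hv0 : (0 : ℝ) < v := lt_of_le_of_ne v.coe_nonneg (by exact_mod_cast (Ne.symm hv))
    have hb : (0 : ℝ) < (2 * (v : ℝ))⁻¹ := by positivity
    have key : ∀ n : ℕ, (∫ x, x ^ n ∂(gaussianReal 0 v)) =
        (Real.sqrt (2 * π * v))⁻¹ * ∫ x : ℝ, x ^ n * Real.exp (-((2 * (v:ℝ))⁻¹) * x ^ 2) := by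
      intro n
      rw [integral_fun_gaussianReal hv]
      rw [← integral_const_mul]
      congr 1
      ext x
      rw [gaussianPDFReal_zero_eq]
      ring
    have h2b : 2 * (2 * (v : ℝ))⁻¹ = (v : ℝ)⁻¹ := by
      field_simp
    have hsq : Real.sqrt (π / (2 * (v : ℝ))⁻¹) = Real.sqrt (2 * π * v) := by
      congr 1
      field_simp
    have hs0 : Real.sqrt (2 * π * v) ≠ 0 := by
      refine ne_of_gt (Real.sqrt_pos.mpr ?_)
      positivity
    constructor
    · rw [key, (integral_gauss_moments hb k).1, h2b, hsq]
      rw [div_eq_mul_inv, ← inv_pow, inv_inv]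
      field_simp
    · rw [key, (integral_gauss_moments hb k).2, mul_zero]

lemma integrable_pow_gaussianReal (v : ℝ≥0) (n : ℕ) :
    Integrable (fun x : ℝ => x ^ n) (gaussianReal 0 v) := by
  by_cases hv : v = 0
  · subst hv
    rw [gaussianReal_zero_var]
    refine (integrable_const ((0:ℝ) ^ n)).congr ?_
    rw [Filter.EventuallyEq, MeasureTheory.ae_dirac_eq]
    simp
  · have hv0 : (0 : ℝ) < v := lt_of_le_of_ne v.coe_nonneg (by exact_mod_cast (Ne.symm hv))
    have hb : (0 : ℝ) < (2 * (v : ℝ))⁻¹ := by positivity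
    rw [gaussianReal_of_var_ne_zero 0 hv]
    rw [integrable_withDensity_iff (measurable_gaussianPDF 0 v)]
    · refine Integrable.congr (((integrable_pow_mul_gauss hb n).const_mul
        ((Real.sqrt (2 * π * v))⁻¹)) : _) ?_
      filter_upwards with x
      rw [gaussianPDF_def]
      rw [ENNReal.toReal_ofReal (gaussianPDFReal_nonneg 0 v x), gaussianPDFReal_zero_eq]
      ring
    · filter_upwards with x
      exact (gaussianPDF_def 0 v ▸ ENNReal.ofReal_lt_top)

section Prob
variable {Ω : Type*} [MeasureSpace Ω] [IsProbabilityMeasure (ℙ : Measure Ω)]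

lemma map_moment {Y : Ω → ℝ} (hY : Measurable Y) {v : ℝ≥0}
    (h : Measure.map Y ℙ = gaussianReal 0 v) (n : ℕ) :
    Integrable (fun ω => Y ω ^ n) ℙ ∧
      (∫ ω, Y ω ^ n ∂ℙ) = ∫ x, x ^ n ∂(gaussianReal 0 v) := by
  have hsm : AEStronglyMeasurable (fun x : ℝ => x ^ n) (Measure.map Y ℙ) :=
    (measurable_id.pow_const n).aestronglyMeasurable
  constructor
  · have h1 := integrable_pow_gaussianReal v n
    rw [← h] at h1
    exact (integrable_map_measure hsm hY.aemeasurable).mp h1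
  · rw [← h, integral_map hY.aemeasurable hsm]

variable {U V : Ω → ℝ} (hUV : IsStdBivGaussian U V)

include hUV

lemma integrable_UV (k l : ℕ) : Integrable (fun ω => U ω ^ k * V ω ^ l) ℙ := by
  obtain ⟨hU, hV, hlin, hU1, hV1⟩ := hUV
  have h1 := (map_moment hU hU1 (2 * k)).1
  have h2 := (map_moment hV hV1 (2 * l)).1
  refine Integrable.mono' ((h1.add h2).div_const 2)
    ((hU.pow_const k).mul (hV.pow_const l)).aestronglyMeasurable ?_
  filter_upwards with ω
  rw [norm_mul, norm_pow, norm_pow]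
  have key : ∀ u v : ℝ, ‖u‖ ^ k * ‖v‖ ^ l ≤ (u ^ (2 * k) + v ^ (2 * l)) / 2 := by
    intro u v
    have habs : ∀ (w : ℝ) (j : ℕ), w ^ (2 * j) = (‖w‖ ^ j) ^ 2 := by
      intro w j
      calc w ^ (2 * j) = (w ^ 2) ^ j := by rw [← pow_mul]
        _ = (‖w‖ ^ 2) ^ j := by rw [Real.norm_eq_abs, sq_abs]
        _ = (‖w‖ ^ j) ^ 2 := by rw [← pow_mul, mul_comm, pow_mul]
    have h3 := habs u k
    have h4 := habs v l
    rw [h3, h4]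
    nlinarith [sq_nonneg (‖u‖ ^ k - ‖v‖ ^ l), norm_nonneg u, norm_nonneg v]
  exact key _ _

lemma integral_U_sq : (∫ ω, U ω ^ 2 ∂ℙ) = 1 := by
  obtain ⟨hU, hV, hlin, hU1, hV1⟩ := hUV
  rw [(map_moment hU hU1 2).2]
  have := (integral_pow_gaussianReal 1 1).1
  norm_num at this ⊢
  rw [this, df_succ, df]
  norm_num

lemma integral_V_sq : (∫ ω, V ω ^ 2 ∂ℙ) = 1 := by
  obtain ⟨hU, hV, hlin, hU1, hV1⟩ := hUV
  rw [(map_moment hV hV1 2).2]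
  have := (integral_pow_gaussianReal 1 1).1
  norm_num at this ⊢
  rw [this, df_succ, df]
  norm_num

end Prob

section Prob2
variable {Ω : Type*} [MeasureSpace Ω] [IsProbabilityMeasure (ℙ : Measure Ω)]
variable {U V : Ω → ℝ} (hUV : IsStdBivGaussian U V)
include hUV

lemma key_expand (m : ℕ) (a : ℝ) :
    ∑ k ∈ Finset.range (2 * m + 1), (Nat.choose (2 * m) k : ℝ) * a ^ k *
        (∫ ω, U ω ^ k * V ω ^ (2 * m - k) ∂ℙ)
      = df m * (a ^ 2 + 2 * (∫ ω, U ω * V ω ∂ℙ) * a + 1) ^ m := by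
  obtain ⟨hU, hV, hlin, hU1, hV1⟩ := hUV
  have hUV' : IsStdBivGaussian U V := ⟨hU, hV, hlin, hU1, hV1⟩
  obtain ⟨v, hv⟩ := hlin a 1
  simp only [one_mul] at hv
  have hYm : Measurable (fun ω => a * U ω + V ω) := (hU.const_mul a).add hV
  -- identify v
  have hInt2 : ∀ k l : ℕ, Integrable (fun ω => U ω ^ k * V ω ^ l) ℙ := integrable_UV hUV'
  have hIntU2 : Integrable (fun ω => U ω ^ 2) ℙ := by
    have := hInt2 2 0
    simpa using this
  have hIntV2 : Integrable (fun ω => V ω ^ 2) ℙ := by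
    have := hInt2 0 2
    simpa using this
  have hIntUV : Integrable (fun ω => U ω * V ω) ℙ := by
    have := hInt2 1 1
    simpa using this
  have hvar : (v : ℝ) = a ^ 2 + 2 * (∫ ω, U ω * V ω ∂ℙ) * a + 1 := by
    have h2 := (map_moment hYm hv 2).2
    have h3 := (integral_pow_gaussianReal v 1).1
    norm_num at h3
    rw [show (2 : ℕ) = 2 * 1 by norm_num] at h2
    rw [h3, df_succ, df] at h2
    norm_num at h2
    rw [← h2]
    have expand : (fun ω => (a * U ω + V ω) ^ (2 * 1)) =
        fun ω => a ^ 2 * U ω ^ 2 + (2 * a) * (U ω * V ω) + V ω ^ 2 := by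
      ext ω; ring
    have i1 : Integrable (fun ω => a ^ 2 * U ω ^ 2) ℙ := hIntU2.const_mul _
    have i2 : Integrable (fun ω => 2 * a * (U ω * V ω)) ℙ := hIntUV.const_mul _
    have hsum : Integrable (fun ω => a ^ 2 * U ω ^ 2 + 2 * a * (U ω * V ω)) ℙ := i1.add i2
    rw [expand, integral_add hsum hIntV2, integral_add i1 i2,
      integral_const_mul, integral_const_mul, integral_U_sq hUV', integral_V_sq hUV']
    ring
  -- main moment computation
  have hmom := (map_moment hYm hv (2 * m)).2
  rw [(integral_pow_gaussianReal v m).1] at hmom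
  -- expand LHS of hmom
  have hexp : (fun ω => (a * U ω + V ω) ^ (2 * m)) = fun ω =>
      ∑ k ∈ Finset.range (2 * m + 1),
        (Nat.choose (2 * m) k : ℝ) * a ^ k * (U ω ^ k * V ω ^ (2 * m - k)) := by
    ext ω
    rw [add_pow]
    refine Finset.sum_congr rfl fun k hk => ?_
    rw [mul_pow]
    ring
  rw [hexp, integral_finset_sum _ (fun k hk => (hInt2 k (2 * m - k)).const_mul _)] at hmom
  simp only [integral_const_mul] at hmom
  rw [← hvar]
  exact hmom

end Prob2

lemma df_eq (k : ℕ) : df k = (Nat.factorial (2 * k) : ℝ) / (2 ^ k * Nat.factorial k) := by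
  induction k with
  | zero => simp [df]
  | succ k ih =>
    rw [df_succ, ih]
    have h1 : 2 * (k + 1) = (2 * k + 1) + 1 := by ring
    rw [h1, Nat.factorial_succ, show 2 * k + 1 = (2 * k) + 1 from rfl, Nat.factorial_succ,
      Nat.factorial_succ]
    have h2 : (Nat.factorial (2 * k) : ℝ) ≠ 0 := Nat.cast_ne_zero.mpr (Nat.factorial_ne_zero _)
    have h3 : (Nat.factorial k : ℝ) ≠ 0 := Nat.cast_ne_zero.mpr (Nat.factorial_ne_zero _)
    have h4 : (2 : ℝ) ^ k ≠ 0 := by positivity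
    field_simp
    push_cast
    ring

lemma df_succ_eq (k : ℕ) : df (k + 1) = (Nat.factorial (2 * k + 1) : ℝ) / (2 ^ k * Nat.factorial k) := by
  rw [df_succ, df_eq, show 2 * k + 1 = (2 * k) + 1 from rfl, Nat.factorial_succ]
  push_cast
  ring

lemma prod_desc {a t : ℕ} (h : t ≤ a) :
    (∏ l ∈ Finset.range t, (-(a : ℝ) + l)) * (Nat.factorial (a - t) : ℝ) =
      (-1) ^ t * (Nat.factorial a : ℝ) := by
  induction t with
  | zero => simp
  | succ t ih =>
    have ht : t ≤ a := Nat.le_of_succ_le h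
    have h1 : a - t = (a - (t + 1)) + 1 := by omega
    have key : ((a - t).factorial : ℝ) = ((a - (t+1)).factorial : ℝ) * ((a : ℝ) - t) := by
      rw [h1, Nat.factorial_succ]
      push_cast [Nat.cast_sub h]
      ring
    have key2 : ((-(a:ℝ)) + t) * ((a - (t+1)).factorial : ℝ) = -((a - t).factorial : ℝ) := by
      rw [key]; ring
    rw [Finset.prod_range_succ, mul_assoc, key2, pow_succ]
    linear_combination (-1 : ℝ) * ih ht

lemma prod_half (t : ℕ) : (∏ l ∈ Finset.range t, ((1:ℝ)/2 + l)) = df t / 2 ^ t := by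
  induction t with
  | zero => simp [df]
  | succ t ih =>
    rw [Finset.prod_range_succ, ih, df_succ, pow_succ, div_mul_eq_mul_div,
      div_eq_div_iff (by positivity) (by positivity)]
    ring

lemma prod_threehalf (t : ℕ) : (∏ l ∈ Finset.range t, ((3:ℝ)/2 + l)) = df (t + 1) / 2 ^ t := by
  induction t with
  | zero => simp [df]
  | succ t ih =>
    rw [Finset.prod_range_succ, ih, df_succ (t+1), pow_succ, div_mul_eq_mul_div,
      div_eq_div_iff (by positivity) (by positivity)]
    push_cast
    ring

lemma prod_desc_div {a b t : ℕ} (ha : t ≤ a) (hb : t ≤ b) :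
    (∏ l ∈ Finset.range t, (-(a : ℝ) + l)) * (∏ l ∈ Finset.range t, (-(b : ℝ) + l)) =
      ((Nat.factorial a : ℝ) * (Nat.factorial b : ℝ)) /
        ((Nat.factorial (a - t) : ℝ) * (Nat.factorial (b - t) : ℝ)) := by
  rw [eq_div_iff (by positivity)]
  have h1 := prod_desc ha
  have h2 := prod_desc hb
  have h3 : ((-1 : ℝ) ^ t) * ((-1 : ℝ) ^ t) = 1 := by
    rw [← mul_pow]; norm_num
  calc (∏ l ∈ Finset.range t, (-(a : ℝ) + l)) * (∏ l ∈ Finset.range t, (-(b : ℝ) + l)) *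
        ((Nat.factorial (a - t) : ℝ) * (Nat.factorial (b - t) : ℝ))
      = ((∏ l ∈ Finset.range t, (-(a : ℝ) + l)) * (Nat.factorial (a - t) : ℝ)) *
        ((∏ l ∈ Finset.range t, (-(b : ℝ) + l)) * (Nat.factorial (b - t) : ℝ)) := by ring
    _ = ((-1) ^ t * (Nat.factorial a : ℝ)) * ((-1) ^ t * (Nat.factorial b : ℝ)) := by rw [h1, h2]
    _ = ((-1 : ℝ) ^ t * ((-1 : ℝ) ^ t)) * ((Nat.factorial a : ℝ) * (Nat.factorial b : ℝ)) := by ring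
    _ = _ := by rw [h3, one_mul]

lemma even_case (a b : ℕ) (x : ℝ) :
    (Nat.choose (2 * (a + b)) (2 * a) : ℝ) * (df a * df b * hyperF a b (1/2) (x^2))
      = df (a + b) * ∑ j ∈ Finset.range ((a + b) + 1), (2 * x) ^ j * (Nat.choose (a + b) j : ℝ) *
          (if j ≤ 2 * a ∧ Even (2 * a - j) then
            (Nat.choose ((a + b) - j) ((2 * a - j) / 2) : ℝ) else 0) := by
  -- restrict the sum to even indices 2t, t ≤ min a b
  have hsum : ∑ j ∈ Finset.range ((a + b) + 1), (2 * x) ^ j * (Nat.choose (a + b) j : ℝ) *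
          (if j ≤ 2 * a ∧ Even (2 * a - j) then
            (Nat.choose ((a + b) - j) ((2 * a - j) / 2) : ℝ) else 0)
      = ∑ t ∈ Finset.range (min a b + 1), (2 * x) ^ (2 * t) * (Nat.choose (a + b) (2 * t) : ℝ) *
          (Nat.choose ((a + b) - 2 * t) (a - t) : ℝ) := by
    set f : ℕ → ℝ := fun j => (2 * x) ^ j * (Nat.choose (a + b) j : ℝ) *
        (if j ≤ 2 * a ∧ Even (2 * a - j) then
          (Nat.choose ((a + b) - j) ((2 * a - j) / 2) : ℝ) else 0) with hf
    have himg : (Finset.range (min a b + 1)).image (fun t => 2 * t) ⊆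
        Finset.range ((a + b) + 1) := by
      intro j hj
      obtain ⟨t, ht, rfl⟩ := Finset.mem_image.mp hj
      have := Finset.mem_range.mp ht
      exact Finset.mem_range.mpr (by omega)
    have hvan : ∀ j ∈ Finset.range ((a + b) + 1),
        j ∉ (Finset.range (min a b + 1)).image (fun t => 2 * t) → f j = 0 := by
      intro j hj hj2
      have hjr : j < (a + b) + 1 := Finset.mem_range.mp hj
      simp only [hf]
      by_cases hle : j ≤ 2 * a ∧ Even (2 * a - j)
      · obtain ⟨t, ht⟩ := hle.2
        have hj' : j = 2 * (a - t) := by omega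
        have h4 : ¬ (a - t ≤ min a b) := by
          intro hc
          exact hj2 (Finset.mem_image.mpr ⟨a - t, Finset.mem_range.mpr (by omega), hj'.symm⟩)
        have h5 : (a + b) - j < (2 * a - j) / 2 := by omega
        simp only [if_pos hle, Nat.choose_eq_zero_of_lt h5]
        simp
      · rw [if_neg hle]
        simp
    have hinj : ∀ p ∈ Finset.range (min a b + 1), ∀ q ∈ Finset.range (min a b + 1),
        2 * p = 2 * q → p = q := fun p _ q _ h => by omega
    calc ∑ j ∈ Finset.range ((a + b) + 1), f j
        = ∑ j ∈ (Finset.range (min a b + 1)).image (fun t => 2 * t), f j :=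
          (Finset.sum_subset himg hvan).symm
      _ = ∑ t ∈ Finset.range (min a b + 1), f (2 * t) := Finset.sum_image hinj
      _ = _ := by
          refine Finset.sum_congr rfl fun t ht => ?_
          have ht' : t ≤ min a b := Nat.lt_succ_iff.mp (Finset.mem_range.mp ht)
          have h1 : 2 * t ≤ 2 * a := by omega
          have h2 : Even (2 * a - 2 * t) := ⟨a - t, by omega⟩
          simp only [hf]
          rw [if_pos ⟨h1, h2⟩, show (2 * a - 2 * t) / 2 = a - t by omega]
  rw [hsum, hyperF, Finset.mul_sum, Finset.mul_sum, Finset.mul_sum]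
  refine Finset.sum_congr rfl fun t ht => ?_
  have ht' : t ≤ min a b := Nat.lt_succ_iff.mp (Finset.mem_range.mp ht)
  have hta : t ≤ a := le_trans ht' (min_le_left _ _)
  have htb : t ≤ b := le_trans ht' (min_le_right _ _)
  rw [prod_desc_div hta htb, prod_half]
  rw [Nat.cast_choose ℝ (show 2 * a ≤ 2 * (a + b) by omega),
    Nat.cast_choose ℝ (show 2 * t ≤ a + b by omega),
    Nat.cast_choose ℝ (show a - t ≤ (a + b) - 2 * t by omega)]
  rw [show 2 * (a + b) - 2 * a = 2 * b by omega,
    show (a + b) - 2 * t - (a - t) = b - t by omega]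
  rw [df_eq a, df_eq b, df_eq (a + b), df_eq t]
  have e1 : (Nat.factorial (2 * (a+b)) : ℝ) ≠ 0 := Nat.cast_ne_zero.mpr (Nat.factorial_ne_zero _)
  have e2 : (Nat.factorial (2 * a) : ℝ) ≠ 0 := Nat.cast_ne_zero.mpr (Nat.factorial_ne_zero _)
  have e3 : (Nat.factorial (2 * b) : ℝ) ≠ 0 := Nat.cast_ne_zero.mpr (Nat.factorial_ne_zero _)
  have e4 : (Nat.factorial a : ℝ) ≠ 0 := Nat.cast_ne_zero.mpr (Nat.factorial_ne_zero _)
  have e5 : (Nat.factorial b : ℝ) ≠ 0 := Nat.cast_ne_zero.mpr (Nat.factorial_ne_zero _)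
  have e6 : (Nat.factorial (a - t) : ℝ) ≠ 0 := Nat.cast_ne_zero.mpr (Nat.factorial_ne_zero _)
  have e7 : (Nat.factorial (b - t) : ℝ) ≠ 0 := Nat.cast_ne_zero.mpr (Nat.factorial_ne_zero _)
  have e8 : (Nat.factorial t : ℝ) ≠ 0 := Nat.cast_ne_zero.mpr (Nat.factorial_ne_zero _)
  have e9 : (Nat.factorial (2 * t) : ℝ) ≠ 0 := Nat.cast_ne_zero.mpr (Nat.factorial_ne_zero _)
  have e10 : (Nat.factorial (a + b) : ℝ) ≠ 0 := Nat.cast_ne_zero.mpr (Nat.factorial_ne_zero _)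
  have e11 : (Nat.factorial ((a + b) - 2 * t) : ℝ) ≠ 0 := Nat.cast_ne_zero.mpr (Nat.factorial_ne_zero _)
  have e12 : (2 : ℝ) ^ (a + b) ≠ 0 := by positivity
  have e13 : (2 : ℝ) ^ t ≠ 0 := by positivity
  have e14 : (2 : ℝ) ^ a ≠ 0 := by positivity
  have e15 : (2 : ℝ) ^ b ≠ 0 := by positivity
  field_simp
  ring

lemma odd_case (a b : ℕ) (x : ℝ) :
    (Nat.choose (2 * (a + b + 1)) (2 * a + 1) : ℝ) *
        (df (a + 1) * df (b + 1) * x * hyperF a b (3/2) (x^2))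
      = df (a + b + 1) * ∑ j ∈ Finset.range ((a + b + 1) + 1),
          (2 * x) ^ j * (Nat.choose (a + b + 1) j : ℝ) *
          (if j ≤ 2 * a + 1 ∧ Even (2 * a + 1 - j) then
            (Nat.choose ((a + b + 1) - j) ((2 * a + 1 - j) / 2) : ℝ) else 0) := by
  have hsum : ∑ j ∈ Finset.range ((a + b + 1) + 1), (2 * x) ^ j * (Nat.choose (a + b + 1) j : ℝ) *
          (if j ≤ 2 * a + 1 ∧ Even (2 * a + 1 - j) then
            (Nat.choose ((a + b + 1) - j) ((2 * a + 1 - j) / 2) : ℝ) else 0)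
      = ∑ t ∈ Finset.range (min a b + 1), (2 * x) ^ (2 * t + 1) *
          (Nat.choose (a + b + 1) (2 * t + 1) : ℝ) *
          (Nat.choose ((a + b + 1) - (2 * t + 1)) (a - t) : ℝ) := by
    set f : ℕ → ℝ := fun j => (2 * x) ^ j * (Nat.choose (a + b + 1) j : ℝ) *
        (if j ≤ 2 * a + 1 ∧ Even (2 * a + 1 - j) then
          (Nat.choose ((a + b + 1) - j) ((2 * a + 1 - j) / 2) : ℝ) else 0) with hf
    have himg : (Finset.range (min a b + 1)).image (fun t => 2 * t + 1) ⊆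
        Finset.range ((a + b + 1) + 1) := by
      intro j hj
      obtain ⟨t, ht, rfl⟩ := Finset.mem_image.mp hj
      have := Finset.mem_range.mp ht
      exact Finset.mem_range.mpr (by omega)
    have hvan : ∀ j ∈ Finset.range ((a + b + 1) + 1),
        j ∉ (Finset.range (min a b + 1)).image (fun t => 2 * t + 1) → f j = 0 := by
      intro j hj hj2
      have hjr : j < (a + b + 1) + 1 := Finset.mem_range.mp hj
      simp only [hf]
      by_cases hle : j ≤ 2 * a + 1 ∧ Even (2 * a + 1 - j)
      · obtain ⟨t, ht⟩ := hle.2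
        have hj' : j = 2 * (a - t) + 1 := by omega
        have h4 : ¬ (a - t ≤ min a b) := by
          intro hc
          exact hj2 (Finset.mem_image.mpr ⟨a - t, Finset.mem_range.mpr (by omega), hj'.symm⟩)
        have h5 : (a + b + 1) - j < (2 * a + 1 - j) / 2 := by omega
        simp only [if_pos hle, Nat.choose_eq_zero_of_lt h5]
        simp
      · rw [if_neg hle]
        simp
    have hinj : ∀ p ∈ Finset.range (min a b + 1), ∀ q ∈ Finset.range (min a b + 1),
        2 * p + 1 = 2 * q + 1 → p = q := fun p _ q _ h => by omega
    calc ∑ j ∈ Finset.range ((a + b + 1) + 1), f j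
        = ∑ j ∈ (Finset.range (min a b + 1)).image (fun t => 2 * t + 1), f j :=
          (Finset.sum_subset himg hvan).symm
      _ = ∑ t ∈ Finset.range (min a b + 1), f (2 * t + 1) := Finset.sum_image hinj
      _ = _ := by
          refine Finset.sum_congr rfl fun t ht => ?_
          have ht' : t ≤ min a b := Nat.lt_succ_iff.mp (Finset.mem_range.mp ht)
          have h1 : 2 * t + 1 ≤ 2 * a + 1 := by omega
          have h2 : Even (2 * a + 1 - (2 * t + 1)) := ⟨a - t, by omega⟩
          simp only [hf]
          rw [if_pos ⟨h1, h2⟩, show (2 * a + 1 - (2 * t + 1)) / 2 = a - t by omega]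
  rw [hsum, hyperF, Finset.mul_sum, Finset.mul_sum, Finset.mul_sum]
  refine Finset.sum_congr rfl fun t ht => ?_
  have ht' : t ≤ min a b := Nat.lt_succ_iff.mp (Finset.mem_range.mp ht)
  have hta : t ≤ a := le_trans ht' (min_le_left _ _)
  have htb : t ≤ b := le_trans ht' (min_le_right _ _)
  rw [prod_desc_div hta htb, prod_threehalf]
  rw [Nat.cast_choose ℝ (show 2 * a + 1 ≤ 2 * (a + b + 1) by omega),
    Nat.cast_choose ℝ (show 2 * t + 1 ≤ a + b + 1 by omega),
    Nat.cast_choose ℝ (show a - t ≤ (a + b + 1) - (2 * t + 1) by omega)]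
  rw [show 2 * (a + b + 1) - (2 * a + 1) = 2 * b + 1 by omega,
    show (a + b + 1) - (2 * t + 1) - (a - t) = b - t by omega,
    show (a + b + 1) - (2 * t + 1) = a + b - 2 * t by omega]
  rw [df_succ_eq a, df_succ_eq b, df_succ_eq t, df_eq (a + b + 1)]
  have e1 : (Nat.factorial (2 * (a + b + 1)) : ℝ) ≠ 0 := Nat.cast_ne_zero.mpr (Nat.factorial_ne_zero _)
  have e2 : (Nat.factorial (2 * a + 1) : ℝ) ≠ 0 := Nat.cast_ne_zero.mpr (Nat.factorial_ne_zero _)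
  have e3 : (Nat.factorial (2 * b + 1) : ℝ) ≠ 0 := Nat.cast_ne_zero.mpr (Nat.factorial_ne_zero _)
  have e4 : (Nat.factorial a : ℝ) ≠ 0 := Nat.cast_ne_zero.mpr (Nat.factorial_ne_zero _)
  have e5 : (Nat.factorial b : ℝ) ≠ 0 := Nat.cast_ne_zero.mpr (Nat.factorial_ne_zero _)
  have e6 : (Nat.factorial (a - t) : ℝ) ≠ 0 := Nat.cast_ne_zero.mpr (Nat.factorial_ne_zero _)
  have e7 : (Nat.factorial (b - t) : ℝ) ≠ 0 := Nat.cast_ne_zero.mpr (Nat.factorial_ne_zero _)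
  have e8 : (Nat.factorial t : ℝ) ≠ 0 := Nat.cast_ne_zero.mpr (Nat.factorial_ne_zero _)
  have e9 : (Nat.factorial (2 * t + 1) : ℝ) ≠ 0 := Nat.cast_ne_zero.mpr (Nat.factorial_ne_zero _)
  have e10 : (Nat.factorial (a + b + 1) : ℝ) ≠ 0 := Nat.cast_ne_zero.mpr (Nat.factorial_ne_zero _)
  have e11 : (Nat.factorial (a + b - 2 * t) : ℝ) ≠ 0 := Nat.cast_ne_zero.mpr (Nat.factorial_ne_zero _)
  have e12 : (2 : ℝ) ^ (a + b + 1) ≠ 0 := by positivity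
  have e13 : (2 : ℝ) ^ t ≠ 0 := by positivity
  have e14 : (2 : ℝ) ^ a ≠ 0 := by positivity
  have e15 : (2 : ℝ) ^ b ≠ 0 := by positivity
  field_simp
  ring

lemma coeff_X2add1 (k d : ℕ) : ((X ^ 2 + 1 : Polynomial ℝ) ^ k).coeff d =
    if Even d then (Nat.choose k (d / 2) : ℝ) else 0 := by
  have hexp : (X ^ 2 + 1 : Polynomial ℝ) ^ k =
      ∑ i ∈ Finset.range (k + 1), Polynomial.C ((Nat.choose k i : ℝ)) * X ^ (2 * i) := by
    rw [add_pow]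
    refine Finset.sum_congr rfl fun i hi => ?_
    rw [map_natCast (Polynomial.C : ℝ →+* Polynomial ℝ), one_pow, mul_one, ← pow_mul]
    exact mul_comm _ _
  rw [hexp, Polynomial.finset_sum_coeff]
  simp only [Polynomial.coeff_C_mul, Polynomial.coeff_X_pow]
  by_cases hd : Even d
  · obtain ⟨c, hc⟩ := hd
    have hc2 : d = 2 * c := by omega
    have hd2 : d / 2 = c := by omega
    simp only [if_pos (⟨c, hc⟩ : Even d), hd2]
    have : ∀ i ∈ Finset.range (k + 1),
        (Nat.choose k i : ℝ) * (if d = 2 * i then 1 else 0) =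
          if c = i then (Nat.choose k i : ℝ) else 0 := by
      intro i hi
      by_cases h : c = i
      · subst h; simp [hc2]
      · have : ¬ d = 2 * i := by omega
        simp [h, this]
    rw [Finset.sum_congr rfl this, Finset.sum_ite_eq]
    by_cases hck : c ∈ Finset.range (k + 1)
    · rw [if_pos hck]
      have hev : Even d := ⟨c, hc⟩
      simp [hev]
    · rw [if_neg hck]
      have : k < c := by simpa using hck
      rw [Nat.choose_eq_zero_of_lt this]
      simp
  · rw [if_neg hd]
    refine Finset.sum_eq_zero fun i hi => ?_
    have : ¬ d = 2 * i := fun h => hd ⟨i, by omega⟩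
    simp [this]

lemma coeff_trinomial (m : ℕ) (x : ℝ) (p : ℕ) :
    ((X ^ 2 + Polynomial.C (2 * x) * X + 1 : Polynomial ℝ) ^ m).coeff p
    = ∑ j ∈ Finset.range (m + 1), (2 * x) ^ j * (Nat.choose m j : ℝ) *
        (if j ≤ p ∧ Even (p - j) then (Nat.choose (m - j) ((p - j) / 2) : ℝ) else 0) := by
  have hre : (X ^ 2 + Polynomial.C (2 * x) * X + 1 : Polynomial ℝ) =
      Polynomial.C (2 * x) * X + (X ^ 2 + 1) := by ring
  rw [hre, add_pow, Polynomial.finset_sum_coeff]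
  refine Finset.sum_congr rfl fun j hj => ?_
  have hterm : (Polynomial.C (2 * x) * X) ^ j * (X ^ 2 + 1) ^ (m - j) * ((Nat.choose m j : ℕ) : Polynomial ℝ)
      = Polynomial.C ((2 * x) ^ j * (Nat.choose m j : ℝ)) * ((X ^ 2 + 1) ^ (m - j) * X ^ j) := by
    rw [mul_pow, ← Polynomial.C_pow, ← map_natCast (Polynomial.C : ℝ →+* Polynomial ℝ)]
    rw [mul_comm (Polynomial.C ((2*x)^j) * X ^ j) ((X^2+1)^(m-j)), Polynomial.C_mul]
    ring
  rw [hterm, Polynomial.coeff_C_mul, Polynomial.coeff_mul_X_pow']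
  by_cases hjp : j ≤ p
  · rw [if_pos hjp, coeff_X2add1]
    by_cases he : Even (p - j)
    · rw [if_pos he, if_pos ⟨hjp, he⟩]
    · rw [if_neg he, if_neg (by tauto), mul_zero]
  · rw [if_neg hjp, if_neg (fun hc => hjp hc.1)]

lemma coeff_extract (m : ℕ) (x : ℝ) (M : ℕ → ℝ)
    (h : ∀ a : ℝ, ∑ k ∈ Finset.range (2 * m + 1), (Nat.choose (2 * m) k : ℝ) * a ^ k * M k
      = df m * (a ^ 2 + 2 * x * a + 1) ^ m) (p : ℕ) (hp : p < 2 * m + 1) :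
    (Nat.choose (2 * m) p : ℝ) * M p =
      df m * ∑ j ∈ Finset.range (m + 1), (2 * x) ^ j * (Nat.choose m j : ℝ) *
        (if j ≤ p ∧ Even (p - j) then (Nat.choose (m - j) ((p - j) / 2) : ℝ) else 0) := by
  set P : Polynomial ℝ := ∑ k ∈ Finset.range (2 * m + 1),
    Polynomial.C ((Nat.choose (2 * m) k : ℝ) * M k) * X ^ k with hP
  set Q : Polynomial ℝ := Polynomial.C (df m) * (X ^ 2 + Polynomial.C (2 * x) * X + 1) ^ m with hQ
  have heval : ∀ a : ℝ, P.eval a = Q.eval a := by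
    intro a
    rw [hP, hQ]
    simp only [Polynomial.eval_finset_sum, Polynomial.eval_mul, Polynomial.eval_pow,
      Polynomial.eval_C, Polynomial.eval_X, Polynomial.eval_add, Polynomial.eval_one]
    rw [← h a]
    refine Finset.sum_congr rfl fun k hk => ?_
    ring
  have hPQ : P = Q := Polynomial.funext heval
  have hcoeffP : P.coeff p = (Nat.choose (2 * m) p : ℝ) * M p := by
    rw [hP, Polynomial.finset_sum_coeff]
    simp only [Polynomial.coeff_C_mul, Polynomial.coeff_X_pow]
    have hterm : ∀ k ∈ Finset.range (2 * m + 1),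
        (Nat.choose (2 * m) k : ℝ) * M k * (if p = k then (1:ℝ) else 0) =
          if k = p then (Nat.choose (2 * m) k : ℝ) * M k else 0 := by
      intro k hk
      by_cases h : k = p
      · subst h; simp
      · have h2 : ¬ p = k := fun hh => h hh.symm
        simp [h, h2]
    rw [Finset.sum_congr rfl hterm, Finset.sum_ite_eq' (Finset.range (2 * m + 1)) p
      (fun k => (Nat.choose (2 * m) k : ℝ) * M k), if_pos (Finset.mem_range.mpr hp)]
  have hcoeffQ : Q.coeff p = df m * ∑ j ∈ Finset.range (m + 1), (2 * x) ^ j * (Nat.choose m j : ℝ) *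
      (if j ≤ p ∧ Even (p - j) then (Nat.choose (m - j) ((p - j) / 2) : ℝ) else 0) := by
    rw [hQ, Polynomial.coeff_C_mul, coeff_trinomial]
  rw [← hcoeffP, hPQ, hcoeffQ]

theorem stmt_19 (m2 m3 : ℕ) (hm2 : 1 ≤ m2) (hm3 : 1 ≤ m3)
    {Ω : Type*} [MeasureSpace Ω] [IsProbabilityMeasure (ℙ : Measure Ω)]
    (U V : Ω → ℝ) (hUV : IsStdBivGaussian U V) :
    (∫ ω, U ω ^ (2 * m2 + 1) * V ω ^ (2 * m3 + 1) ∂ℙ) =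
      df (m2 + 1) * df (m3 + 1) * (∫ ω, U ω * V ω ∂ℙ) *
        hyperF m2 m3 (3 / 2) ((∫ ω, U ω * V ω ∂ℙ) ^ 2) ∧
    (∫ ω, U ω ^ (2 * m2) * V ω ^ (2 * m3 + 2) ∂ℙ) =
      df m2 * df (m3 + 1) * hyperF m2 (m3 + 1) (1 / 2) ((∫ ω, U ω * V ω ∂ℙ) ^ 2) ∧
    (∫ ω, U ω ^ (2 * m2 + 2) * V ω ^ (2 * m3) ∂ℙ) =
      df (m2 + 1) * df m3 * hyperF (m2 + 1) m3 (1 / 2) ((∫ ω, U ω * V ω ∂ℙ) ^ 2) := by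
  have hx : True := trivial
  refine ⟨?_, ?_, ?_⟩
  · -- odd-odd case
    have hkey := key_expand hUV (m2 + m3 + 1)
    have h1 := coeff_extract (m2 + m3 + 1) (∫ ω, U ω * V ω ∂ℙ)
      (fun k => ∫ ω, U ω ^ k * V ω ^ (2 * (m2 + m3 + 1) - k) ∂ℙ) hkey (2 * m2 + 1) (by omega)
    have h2 := odd_case m2 m3 (∫ ω, U ω * V ω ∂ℙ)
    have hC : ((Nat.choose (2 * (m2 + m3 + 1)) (2 * m2 + 1)) : ℝ) ≠ 0 :=
      Nat.cast_ne_zero.mpr (Nat.choose_pos (by omega)).ne'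
    have h3 := mul_left_cancel₀ hC (h1.trans h2.symm)
    rw [show 2 * m3 + 1 = 2 * (m2 + m3 + 1) - (2 * m2 + 1) from by omega]
    exact h3
  · -- even-even case (2 m2, 2 m3 + 2)
    have hkey := key_expand hUV (m2 + (m3 + 1))
    have h1 := coeff_extract (m2 + (m3 + 1)) (∫ ω, U ω * V ω ∂ℙ)
      (fun k => ∫ ω, U ω ^ k * V ω ^ (2 * (m2 + (m3 + 1)) - k) ∂ℙ) hkey (2 * m2) (by omega)
    have h2 := even_case m2 (m3 + 1) (∫ ω, U ω * V ω ∂ℙ)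
    have hC : ((Nat.choose (2 * (m2 + (m3 + 1))) (2 * m2)) : ℝ) ≠ 0 :=
      Nat.cast_ne_zero.mpr (Nat.choose_pos (by omega)).ne'
    have h3 := mul_left_cancel₀ hC (h1.trans h2.symm)
    rw [show 2 * m3 + 2 = 2 * (m2 + (m3 + 1)) - 2 * m2 from by omega]
    exact h3
  · -- even-even case (2 m2 + 2, 2 m3)
    have hkey := key_expand hUV ((m2 + 1) + m3)
    have h1 := coeff_extract ((m2 + 1) + m3) (∫ ω, U ω * V ω ∂ℙ)
      (fun k => ∫ ω, U ω ^ k * V ω ^ (2 * ((m2 + 1) + m3) - k) ∂ℙ) hkey (2 * (m2 + 1)) (by omega)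
    have h2 := even_case (m2 + 1) m3 (∫ ω, U ω * V ω ∂ℙ)
    have hC : ((Nat.choose (2 * ((m2 + 1) + m3)) (2 * (m2 + 1))) : ℝ) ≠ 0 :=
      Nat.cast_ne_zero.mpr (Nat.choose_pos (by omega)).ne'
    have h3 := mul_left_cancel₀ hC (h1.trans h2.symm)
    rw [show 2 * m2 + 2 = 2 * (m2 + 1) from by omega,
      show 2 * m3 = 2 * ((m2 + 1) + m3) - 2 * (m2 + 1) from by omega]
    exact h3
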